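/- arXiv:2003.08104 — 3 statements merged into one kernel-verified Lean document; each statement's English description precedes it below -/
import Mathlib

section
/- Let J be the 2×2 rotation matrix with rows (0,-1) and (1,0) and let γ = 1 − 1/√2 (so that γ² − 2γ + 1/2 = 0). For any λ > 0, the operator norm of the matrix A_λ = (Id + γλJ)⁻²(Id + (2γ−1)λJ) equals 1/√(1 + γ⁴λ⁴/(1 + 2γ²λ²)), and in particular is strictly less than 1. -/
open Matrix Real

lemma clm_apply (A : Matrix (Fin 2) (Fin 2) ℝ) (x : EuclideanSpace ℝ (Fin 2)) (i : Fin 2) :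
    (Matrix.toEuclideanCLM (n := Fin 2) (𝕜 := ℝ) A x) i = (A *ᵥ (WithLp.equiv _ _ x)) i := by
  rfl

lemma norm_rot (a b : ℝ) :
    ‖Matrix.toEuclideanCLM (n := Fin 2) (𝕜 := ℝ) !![a, -b; b, a]‖ = Real.sqrt (a^2 + b^2) := by
  set T := Matrix.toEuclideanCLM (n := Fin 2) (𝕜 := ℝ) !![a, -b; b, a]
  have key : ∀ x : EuclideanSpace ℝ (Fin 2), ‖T x‖ = Real.sqrt (a^2+b^2) * ‖x‖ := by
    intro x
    have h0 : (T x) 0 = a * x 0 - b * x 1 := by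
      rw [clm_apply]; simp [Matrix.mulVec, dotProduct, Fin.sum_univ_two, Matrix.vecHead, Matrix.vecTail]; ring_nf
    have h1 : (T x) 1 = b * x 0 + a * x 1 := by
      rw [clm_apply]; simp [Matrix.mulVec, dotProduct, Fin.sum_univ_two, Matrix.vecHead, Matrix.vecTail]
    rw [EuclideanSpace.norm_eq, EuclideanSpace.norm_eq, Fin.sum_univ_two, Fin.sum_univ_two,
      h0, h1, ← Real.sqrt_mul (by positivity)]
    congr 1
    simp only [Real.norm_eq_abs, sq_abs]
    ring
  apply le_antisymm
  · exact ContinuousLinearMap.opNorm_le_bound _ (Real.sqrt_nonneg _) (fun x => (key x).le)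
  · have := T.le_opNorm (EuclideanSpace.single 0 1)
    rw [key, EuclideanSpace.norm_single, norm_one, mul_one, mul_one] at this
    exact this

set_option maxHeartbeats 1000000 in
/-- With `γ = 1 − 1/√2` and `λ > 0`, the operator norm of
`A_λ = (Id + γλJ)⁻²(Id + (2γ−1)λJ)` equals `1/√(1 + γ⁴λ⁴/(1 + 2γ²λ²))` and is `< 1`. -/
theorem stmt4 (l : ℝ) (hl : 0 < l)
    (J : Matrix (Fin 2) (Fin 2) ℝ) (hJ : J = !![0, -1; 1, 0])
    (γ : ℝ) (hγ : γ = 1 - 1 / Real.sqrt 2) :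
    ‖Matrix.toEuclideanCLM (n := Fin 2) (𝕜 := ℝ)
        (((1 + (γ * l) • J)⁻¹) ^ 2 * (1 + ((2 * γ - 1) * l) • J))‖
      = 1 / Real.sqrt (1 + γ ^ 4 * l ^ 4 / (1 + 2 * γ ^ 2 * l ^ 2)) ∧
    ‖Matrix.toEuclideanCLM (n := Fin 2) (𝕜 := ℝ)
        (((1 + (γ * l) • J)⁻¹) ^ 2 * (1 + ((2 * γ - 1) * l) • J))‖ < 1 := by
  have hs2 : Real.sqrt 2 > 1 := by
    nlinarith [Real.sq_sqrt (by norm_num : (2:ℝ) ≥ 0), Real.sqrt_nonneg 2]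
  have hγpos : 0 < γ := by
    rw [hγ]; rw [gt_iff_lt] at hs2
    have : 1 / Real.sqrt 2 < 1 := by
      rw [div_lt_one (by linarith)]; exact hs2
    linarith
  set c : ℝ := γ * l with hc
  set d : ℝ := (2 * γ - 1) * l with hd
  have hcpos : 0 < c := mul_pos hγpos hl
  have hden : (0:ℝ) < 1 + c^2 := by positivity
  have hd2 : d^2 = 2 * c^2 := by
    have h2 : Real.sqrt 2 * Real.sqrt 2 = 2 := Real.mul_self_sqrt (by norm_num)
    have hs2ne : Real.sqrt 2 ≠ 0 := by positivity
    have : 2 * γ - 1 = -(Real.sqrt 2 * γ) := by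
      rw [hγ]; field_simp; nlinarith [h2]
    rw [hd, hc, this]; nlinarith [h2]
  set a : ℝ := ((1 - c^2) + 2*c*d) / (1+c^2)^2 with ha
  set b : ℝ := ((1 - c^2)*d - 2*c) / (1+c^2)^2 with hb
  have hinv : (1 + c • J)⁻¹ = ((1+c^2)⁻¹) • !![1, c; -c, 1] := by
    apply Matrix.inv_eq_right_inv
    subst hJ
    rw [Matrix.one_fin_two]
    ext i j
    fin_cases i <;> fin_cases j <;>
      simp [Matrix.mul_apply, Fin.sum_univ_two] <;> field_simp <;> ring
  have hmat : ((1 + c • J)⁻¹) ^ 2 * (1 + d • J) = !![a, -b; b, a] := by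
    rw [hinv, sq]
    subst hJ
    rw [Matrix.one_fin_two]
    ext i j
    fin_cases i <;> fin_cases j <;>
      simp [Matrix.mul_apply, Fin.sum_univ_two, ha, hb] <;> field_simp <;> ring
  have hsum : a^2 + b^2 = (1 + 2*c^2) / (1+c^2)^2 := by
    rw [ha, hb, div_pow, div_pow, ← add_div,
      div_eq_div_iff (by positivity) (by positivity)]
    linear_combination (1+c^2)^4 * hd2
  have hX : 1 + γ^4 * l^4 / (1 + 2*γ^2*l^2) = (1+c^2)^2 / (1 + 2*c^2) := by
    have hden2 : (0:ℝ) < 1 + 2*c^2 := by positivity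
    have : γ^4 * l^4 = c^4 := by rw [hc]; ring
    rw [this]
    have : 2 * γ^2 * l^2 = 2 * c^2 := by rw [hc]; ring
    rw [this]
    field_simp
    ring
  have hsum' : a^2 + b^2 = (1 + γ^4 * l^4 / (1 + 2*γ^2*l^2))⁻¹ := by
    rw [hsum, hX]
    rw [inv_div]
  have hnorm : ‖Matrix.toEuclideanCLM (n := Fin 2) (𝕜 := ℝ)
      (((1 + c • J)⁻¹) ^ 2 * (1 + d • J))‖
      = 1 / Real.sqrt (1 + γ ^ 4 * l ^ 4 / (1 + 2 * γ ^ 2 * l ^ 2)) := by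
    rw [hmat, norm_rot, hsum', Real.sqrt_inv, one_div]
  refine ⟨hnorm, ?_⟩
  rw [hnorm]
  have hXpos : 1 < 1 + γ^4 * l^4 / (1 + 2*γ^2*l^2) := by
    have : 0 < γ^4 * l^4 / (1 + 2*γ^2*l^2) := by positivity
    linarith
  have : 1 < Real.sqrt (1 + γ^4 * l^4 / (1 + 2*γ^2*l^2)) := by
    rw [show (1:ℝ) = Real.sqrt 1 from (Real.sqrt_one).symm]
    exact Real.sqrt_lt_sqrt (by norm_num) (by rw [Real.sqrt_one]; exact hXpos)
  rw [div_lt_one (by linarith)]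
  exact this
end

section
/- A priori bound for characteristics (continuous level): let E : ℝ × ℝ² → ℝ² be C¹ with ‖E‖ ≤ K₀, ‖∂ₜE‖ ≤ K_t, ‖DₓE‖ ≤ K_x globally. Let ε > 0 and (x_ε, v_ε) solve ε x_ε' = v_ε, ε v_ε' = E(t, x_ε) − v_ε^⊥/ε on [0,∞), where v^⊥ = (−v₂, v₁). Define z_ε(t) = v_ε(t) + ε E^⊥(t, x_ε(t)). Then for all t ≥ 0, ‖z_ε(t)‖ ≤ e^{K_x t}(‖v_ε(0)‖ + ε K₀) + ε t e^{K_x t}(K_t + K_x K₀), and ‖v_ε(t)‖ ≤ ‖z_ε(t)‖ + K₀ ε. -/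
/-- Rotation by π/2 on Euclidean `ℝ²`: `(a,b)^⊥ = (−b,a)`. -/
noncomputable def perp (v : EuclideanSpace ℝ (Fin 2)) : EuclideanSpace ℝ (Fin 2) :=
  WithLp.toLp 2 ![-(v 1), v 0]

section aux

lemma perp_apply0 (v : EuclideanSpace ℝ (Fin 2)) : perp v 0 = -(v 1) := rfl
lemma perp_apply1 (v : EuclideanSpace ℝ (Fin 2)) : perp v 1 = v 0 := rfl

noncomputable def perpL : EuclideanSpace ℝ (Fin 2) →L[ℝ] EuclideanSpace ℝ (Fin 2) :=
  LinearMap.toContinuousLinearMap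
  { toFun := perp
    map_add' := by
      intro u v; ext i; fin_cases i <;>
        simp [perp_apply0, perp_apply1, PiLp.add_apply] <;> ring
    map_smul' := by
      intro c u; ext i; fin_cases i <;>
        simp [perp_apply0, perp_apply1, PiLp.smul_apply, smul_eq_mul] }

lemma perpL_apply (v : EuclideanSpace ℝ (Fin 2)) : perpL v = perp v := rfl

lemma perp_perp (v : EuclideanSpace ℝ (Fin 2)) : perp (perp v) = -v := by
  ext i; fin_cases i <;> simp [perp_apply0, perp_apply1, PiLp.neg_apply]

lemma norm_perp (v : EuclideanSpace ℝ (Fin 2)) : ‖perp v‖ = ‖v‖ := by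
  rw [EuclideanSpace.norm_eq, EuclideanSpace.norm_eq]
  congr 1
  simp [Fin.sum_univ_two, perp_apply0, perp_apply1]
  ring

lemma norm_rot_s11 (a b : ℝ) (hab : a ^ 2 + b ^ 2 = 1) (u : EuclideanSpace ℝ (Fin 2)) :
    ‖a • u + b • perp u‖ = ‖u‖ := by
  rw [EuclideanSpace.norm_eq, EuclideanSpace.norm_eq]
  congr 1
  simp only [Fin.sum_univ_two, PiLp.add_apply, PiLp.smul_apply, smul_eq_mul,
    perp_apply0, perp_apply1, Real.norm_eq_abs, sq_abs]
  nlinarith [sq_nonneg (u 0), sq_nonneg (u 1)]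

lemma exp_sub_one_le (a : ℝ) (ha : 0 ≤ a) : Real.exp a - 1 ≤ a * Real.exp a := by
  have h1 : -a + 1 ≤ Real.exp (-a) := Real.add_one_le_exp (-a)
  have h2 : Real.exp (-a) * Real.exp a = 1 := by
    rw [← Real.exp_add]; simp
  nlinarith [Real.exp_pos a]

lemma gron_le {δ δ' K η t : ℝ} (hδ : δ ≤ δ') (hK : 0 ≤ K) (hη : 0 ≤ η) (ht : 0 ≤ t) :
    gronwallBound δ K η t ≤ Real.exp (K * t) * δ' + t * Real.exp (K * t) * η := by
  rcases eq_or_lt_of_le hK with hK0 | hKpos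
  · rw [← hK0]
    have h0 : gronwallBound δ 0 η t = δ + η * t := by rw [gronwallBound_K0]
    have h1 : Real.exp (0 * t) = 1 := by rw [zero_mul, Real.exp_zero]
    rw [h0, h1]
    nlinarith
  · rw [gronwallBound_of_K_ne_0 (ne_of_gt hKpos)]
    have he : Real.exp (K * t) - 1 ≤ (K * t) * Real.exp (K * t) :=
      exp_sub_one_le (K * t) (by positivity)
    have hinv : η / K * (Real.exp (K * t) - 1) ≤ t * Real.exp (K * t) * η := by
      rw [div_mul_eq_mul_div, div_le_iff₀ hKpos]
      calc η * (Real.exp (K * t) - 1) ≤ η * ((K * t) * Real.exp (K * t)) := by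
            apply mul_le_mul_of_nonneg_left he hη
        _ = t * Real.exp (K * t) * η * K := by ring
    have hd : δ * Real.exp (K * t) ≤ Real.exp (K * t) * δ' := by
      rw [mul_comm]
      exact mul_le_mul_of_nonneg_left hδ (Real.exp_pos _).le
    linarith

end aux

set_option maxHeartbeats 1000000 in
theorem stmt11 (K₀ Kt Kx ε : ℝ) (hε : 0 < ε)
    (E : ℝ → EuclideanSpace ℝ (Fin 2) → EuclideanSpace ℝ (Fin 2))
    (hE : ContDiff ℝ 1 (fun p : ℝ × EuclideanSpace ℝ (Fin 2) => E p.1 p.2))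
    (hK₀ : ∀ t x, ‖E t x‖ ≤ K₀)
    (hKt : ∀ t x, ‖fderiv ℝ (fun s => E s x) t‖ ≤ Kt)
    (hKx : ∀ t x, ‖fderiv ℝ (fun y => E t y) x‖ ≤ Kx)
    (x v : ℝ → EuclideanSpace ℝ (Fin 2))
    (hx : ∀ t, HasDerivAt x (ε⁻¹ • v t) t)
    (hv : ∀ t, HasDerivAt v (ε⁻¹ • E t (x t) - (ε ^ 2)⁻¹ • perp (v t)) t)
    (z : ℝ → EuclideanSpace ℝ (Fin 2))
    (hzdef : ∀ t, z t = v t + ε • perp (E t (x t))) :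
    ∀ t, 0 ≤ t →
      ‖z t‖ ≤ Real.exp (Kx * t) * (‖v 0‖ + ε * K₀)
          + ε * t * Real.exp (Kx * t) * (Kt + Kx * K₀) ∧
      ‖v t‖ ≤ ‖z t‖ + K₀ * ε := by
  have hK₀0 : 0 ≤ K₀ := le_trans (norm_nonneg _) (hK₀ 0 0)
  have hKt0 : 0 ≤ Kt := le_trans (norm_nonneg _) (hKt 0 0)
  have hKx0 : 0 ≤ Kx := le_trans (norm_nonneg _) (hKx 0 0)
  set F : ℝ × EuclideanSpace ℝ (Fin 2) → EuclideanSpace ℝ (Fin 2) := fun p => E p.1 p.2 with hF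
  have hFd : Differentiable ℝ F := hE.differentiable one_ne_zero
  set DF : ℝ → (ℝ × EuclideanSpace ℝ (Fin 2) →L[ℝ] EuclideanSpace ℝ (Fin 2)) := fun t => fderiv ℝ F (t, x t) with hDF
  -- derivative of t ↦ E t (x t)
  have hExt : ∀ t, HasDerivAt (fun s => E s (x s)) (DF t (1, ε⁻¹ • v t)) t := by
    intro t
    have hc : HasDerivAt (fun s => (s, x s)) ((1 : ℝ), ε⁻¹ • v t) t :=
      (hasDerivAt_id t).prodMk (hx t)
    exact (hFd (t, x t)).hasFDerivAt.comp_hasDerivAt t hc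
  -- bound on time partial derivative
  have hDt : ∀ t, ‖DF t (1, 0)‖ ≤ Kt := by
    intro t
    have hc : HasDerivAt (fun s => (s, x t)) ((1 : ℝ), (0 : EuclideanSpace ℝ (Fin 2))) t :=
      (hasDerivAt_id t).prodMk (hasDerivAt_const t (x t))
    have hpt : HasDerivAt (fun s => E s (x t)) (DF t (1, 0)) t := by
      have := (hFd (t, x t)).hasFDerivAt.comp_hasDerivAt t hc; exact this
    have h1 : DF t (1, 0) = deriv (fun s => E s (x t)) t := (hpt.deriv).symm
    have h2 : deriv (fun s => E s (x t)) t = fderiv ℝ (fun s => E s (x t)) t 1 := rfl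
    rw [h1, h2]
    calc ‖fderiv ℝ (fun s => E s (x t)) t 1‖
        ≤ ‖fderiv ℝ (fun s => E s (x t)) t‖ * ‖(1 : ℝ)‖ :=
          ContinuousLinearMap.le_opNorm _ _
      _ ≤ Kt := by rw [norm_one, mul_one]; exact hKt t (x t)
  -- bound on space partial derivative
  have hDx : ∀ t (b : EuclideanSpace ℝ (Fin 2)), ‖DF t (0, b)‖ ≤ Kx * ‖b‖ := by
    intro t b
    have hpx : HasFDerivAt (fun y => E t y)
        ((DF t).comp (ContinuousLinearMap.inr ℝ ℝ (EuclideanSpace ℝ (Fin 2)))) (x t) :=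
      (hFd (t, x t)).hasFDerivAt.comp (x t) (hasFDerivAt_prodMk_right t (x t))
    have h1 : DF t (0, b) = fderiv ℝ (fun y => E t y) (x t) b := by
      rw [hpx.fderiv]; rfl
    rw [h1]
    calc ‖fderiv ℝ (fun y => E t y) (x t) b‖
        ≤ ‖fderiv ℝ (fun y => E t y) (x t)‖ * ‖b‖ := ContinuousLinearMap.le_opNorm _ _
      _ ≤ Kx * ‖b‖ := mul_le_mul_of_nonneg_right (hKx t (x t)) (norm_nonneg _)
  -- the remainder
  set r : ℝ → EuclideanSpace ℝ (Fin 2) := fun s => ε • perp (DF s (1, 0)) + perp (DF s (0, v s)) with hr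
  set k : ℝ := (ε ^ 2)⁻¹ with hk
  -- derivative of z
  have hzd : ∀ t, HasDerivAt z (-(k • perp (z t)) + r t) t := by
    intro t
    have hz' : z = fun s => v s + ε • perpL (E s (x s)) := by
      funext s; rw [hzdef s, perpL_apply]
    have hp : HasDerivAt (fun s => perpL (E s (x s))) (perpL (DF t (1, ε⁻¹ • v t))) t :=
      perpL.hasFDerivAt.comp_hasDerivAt t (hExt t)
    have h := (hv t).add (hp.const_smul ε)
    rw [show (v + ε • fun s => perpL (E s (x s))) = z from hz'.symm] at h
    refine h.congr_deriv ?_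
    -- algebraic identity
    have hsplit : DF t (1, ε⁻¹ • v t) = DF t (1, 0) + ε⁻¹ • DF t (0, v t) := by
      rw [← (DF t).map_smul, ← (DF t).map_add]
      congr 1
      simp [Prod.ext_iff]
    have hvz : v t = z t - ε • perp (E t (x t)) := by rw [hzdef t]; abel
    have hperpv : perp (v t) = perp (z t) + ε • E t (x t) := by
      rw [← perpL_apply, hvz, map_sub, map_smul, perpL_apply, perpL_apply, perp_perp]
      module
    rw [hsplit, map_add, map_smul, hperpv]
    simp only [perpL_apply, hr, hk]
    match_scalars <;> (field_simp; try ring)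
  -- the rotated variable
  set w : ℝ → EuclideanSpace ℝ (Fin 2) := fun s => Real.cos (k * s) • z s + Real.sin (k * s) • perp (z s) with hw
  have hwz : ∀ s, ‖w s‖ = ‖z s‖ := fun s =>
    norm_rot_s11 _ _ (Real.cos_sq_add_sin_sq (k * s)) (z s)
  set W : ℝ → EuclideanSpace ℝ (Fin 2) := fun s => Real.cos (k * s) • r s + Real.sin (k * s) • perp (r s) with hW
  have hWr : ∀ s, ‖W s‖ = ‖r s‖ := fun s =>
    norm_rot_s11 _ _ (Real.cos_sq_add_sin_sq (k * s)) (r s)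
  have hwd : ∀ t, HasDerivAt w (W t) t := by
    intro t
    have hks : HasDerivAt (fun s => k * s) k t := by
      simpa using (hasDerivAt_id t).const_mul k
    have hcos : HasDerivAt (fun s => Real.cos (k * s)) (-Real.sin (k * t) * k) t :=
      (Real.hasDerivAt_cos (k * t)).comp t hks
    have hsin : HasDerivAt (fun s => Real.sin (k * s)) (Real.cos (k * t) * k) t :=
      (Real.hasDerivAt_sin (k * t)).comp t hks
    have hpz : HasDerivAt (fun s => perpL (z s)) (perpL (-(k • perp (z t)) + r t)) t :=
      perpL.hasFDerivAt.comp_hasDerivAt t (hzd t)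
    have hpz' : HasDerivAt (fun s => perp (z s)) (k • z t + perp (r t)) t := by
      have : perpL (-(k • perp (z t)) + r t) = k • z t + perp (r t) := by
        rw [map_add, map_neg, map_smul, perpL_apply, perpL_apply, perp_perp]
        rw [smul_neg, neg_neg]
      rw [← this]
      exact hpz.congr_deriv rfl
    have h1 := hcos.smul (hzd t)
    have h2 := hsin.smul hpz'
    have h := h1.add h2
    refine HasDerivAt.congr_deriv (f := w) h ?_
    show _ = Real.cos (k * t) • r t + Real.sin (k * t) • perp (r t)
    module
  -- norm bounds
  have hvb : ∀ s, ‖v s‖ ≤ ‖z s‖ + K₀ * ε := by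
    intro s
    have hvs : v s = z s - ε • perp (E s (x s)) := by rw [hzdef s]; abel
    rw [hvs]
    calc ‖z s - ε • perp (E s (x s))‖ ≤ ‖z s‖ + ‖ε • perp (E s (x s))‖ := norm_sub_le _ _
      _ ≤ ‖z s‖ + K₀ * ε := by
          rw [norm_smul, norm_perp, Real.norm_eq_abs, abs_of_pos hε]
          have := hK₀ s (x s); nlinarith
  have hrb : ∀ s, ‖r s‖ ≤ Kx * ‖z s‖ + ε * (Kt + Kx * K₀) := by
    intro s
    have h1 : ‖r s‖ ≤ ε * Kt + Kx * ‖v s‖ := by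
      rw [hr]
      calc ‖ε • perp (DF s (1, 0)) + perp (DF s (0, v s))‖
          ≤ ‖ε • perp (DF s (1, 0))‖ + ‖perp (DF s (0, v s))‖ := norm_add_le _ _
        _ ≤ ε * Kt + Kx * ‖v s‖ := by
            rw [norm_smul, norm_perp, norm_perp, Real.norm_eq_abs, abs_of_pos hε]
            have h2 := hDt s; have h3 := hDx s (v s)
            nlinarith
    have h2 := hvb s
    have h3 : Kx * ‖v s‖ ≤ Kx * (‖z s‖ + K₀ * ε) := mul_le_mul_of_nonneg_left h2 hKx0
    linarith
  intro t ht
  refine ⟨?_, hvb t⟩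
  set δ := ‖v 0‖ + ε * K₀ with hδ
  set η := ε * (Kt + Kx * K₀) with hη
  have hw0 : ‖w 0‖ ≤ δ := by
    rw [hwz 0, hzdef 0, hδ]
    calc ‖v 0 + ε • perp (E 0 (x 0))‖ ≤ ‖v 0‖ + ‖ε • perp (E 0 (x 0))‖ := norm_add_le _ _
      _ ≤ ‖v 0‖ + ε * K₀ := by
          rw [norm_smul, norm_perp, Real.norm_eq_abs, abs_of_pos hε]
          have := hK₀ 0 (x 0); nlinarith
  have hcont : ContinuousOn w (Set.Icc 0 t) := fun s _ =>
    ((hwd s).continuousAt).continuousWithinAt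
  have hderiv : ∀ s ∈ Set.Ico 0 t, HasDerivWithinAt w (W s) (Set.Ici s) s := fun s _ =>
    (hwd s).hasDerivWithinAt
  have hbound : ∀ s ∈ Set.Ico 0 t, ‖W s‖ ≤ Kx * ‖w s‖ + η := by
    intro s _
    rw [hWr s, hwz s]; exact hrb s
  have hmain := norm_le_gronwallBound_of_norm_deriv_right_le hcont hderiv hw0 hbound t
    (Set.right_mem_Icc.2 ht)
  rw [sub_zero] at hmain
  have hηn : 0 ≤ η := by rw [hη]; exact mul_nonneg hε.le (add_nonneg hKt0 (mul_nonneg hKx0 hK₀0))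
  have hg := gron_le (le_refl δ) hKx0 hηn ht
  rw [← hwz t]
  calc ‖w t‖ ≤ gronwallBound δ Kx η t := hmain
    _ ≤ Real.exp (Kx * t) * δ + t * Real.exp (Kx * t) * η := hg
    _ = Real.exp (Kx * t) * (‖v 0‖ + ε * K₀)
        + ε * t * Real.exp (Kx * t) * (Kt + Kx * K₀) := by rw [hδ, hη]; ring
end

section
/- Contraction property of the implicit first step: let E : ℝ × ℝ² → ℝ² satisfy ‖DₓE‖ ≤ K_x, let ε, Δt > 0 with K_x Δt < 1/2, and define F(y, v) = (y₀ − Δt·E^⊥(t₁, y + ε v^⊥), (Id + (Δt/ε²)J)⁻¹(v₀ + (Δt/ε)·E(t₁, y + ε v^⊥))). Then F is Lipschitz with constant at most 2K_xΔt < 1 with respect to the norm ‖(y,v)‖_ε := ‖y‖ + ε‖v‖, and hence has a unique fixed point. -/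
/-- The rotation matrix `J`. -/
def Jmat : Matrix (Fin 2) (Fin 2) ℝ := !![0, -1; 1, 0]

lemma perp_sub (u v : EuclideanSpace ℝ (Fin 2)) : perp (u - v) = perp u - perp v := by
  ext i
  fin_cases i <;> simp [perp] <;> ring

lemma inv_bound (l : ℝ) (x : EuclideanSpace ℝ (Fin 2)) :
    ‖Matrix.toEuclideanCLM (n := Fin 2) (𝕜 := ℝ) ((1 + l • Jmat)⁻¹) x‖ ≤ ‖x‖ := by
  have hl : (1:ℝ) + l^2 ≠ 0 := by positivity
  have hM : (1 : Matrix (Fin 2) (Fin 2) ℝ) + l • Jmat = !![1, -l; l, 1] := by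
    ext i j
    fin_cases i <;> fin_cases j <;> simp [Jmat]
  have hN : (!![1, -l; l, 1] : Matrix (Fin 2) (Fin 2) ℝ) *
      (((1:ℝ)+l^2)⁻¹ • !![1, l; -l, 1]) = 1 := by
    ext i j
    fin_cases i <;> fin_cases j <;>
      simp [Matrix.mul_apply, Fin.sum_univ_two] <;> field_simp <;> ring
  have hinv : ((1 : Matrix (Fin 2) (Fin 2) ℝ) + l • Jmat)⁻¹
      = ((1:ℝ)+l^2)⁻¹ • !![1, l; -l, 1] := by
    rw [hM]
    exact Matrix.inv_eq_right_inv hN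
  rw [hinv]
  set w := Matrix.toEuclideanCLM (n := Fin 2) (𝕜 := ℝ) (((1:ℝ)+l^2)⁻¹ • !![1, l; -l, 1]) x with hw
  have hcomp : ∀ i, w i = ((((1:ℝ)+l^2)⁻¹ • !![1, l; -l, 1] : Matrix (Fin 2) (Fin 2) ℝ).mulVec (fun j => x j)) i := by
    intro i
    have := Matrix.ofLp_toEuclideanCLM (n := Fin 2) (𝕜 := ℝ)
      (((1:ℝ)+l^2)⁻¹ • !![1, l; -l, 1]) x
    exact congrFun this i
  have h0 : w 0 = ((1:ℝ)+l^2)⁻¹ * (x 0 + l * x 1) := by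
    rw [hcomp 0]; simp [Matrix.mulVec, dotProduct, Fin.sum_univ_two]; ring
  have h1 : w 1 = ((1:ℝ)+l^2)⁻¹ * (-l * x 0 + x 1) := by
    rw [hcomp 1]; simp [Matrix.mulVec, dotProduct, Fin.sum_univ_two]; ring
  rw [EuclideanSpace.norm_eq, EuclideanSpace.norm_eq]
  apply Real.sqrt_le_sqrt
  rw [Fin.sum_univ_two, Fin.sum_univ_two, h0, h1]
  have hc1 : ((1:ℝ)+l^2)⁻¹ ≤ 1 := by
    rw [inv_le_one_iff₀]; right; nlinarith [sq_nonneg l]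
  rw [Real.norm_eq_abs, Real.norm_eq_abs, Real.norm_eq_abs, Real.norm_eq_abs]
  rw [sq_abs, sq_abs, sq_abs, sq_abs]
  have hcc : ((1:ℝ)+l^2)⁻¹^2 * ((1:ℝ)+l^2) = ((1:ℝ)+l^2)⁻¹ := by
    rw [pow_two, mul_assoc, inv_mul_cancel₀ hl, mul_one]
  calc ((1 + l ^ 2)⁻¹ * (x 0 + l * x 1)) ^ 2 + ((1 + l ^ 2)⁻¹ * (-l * x 0 + x 1)) ^ 2
      = ((1:ℝ)+l^2)⁻¹^2 * ((1:ℝ)+l^2) * (x 0 ^ 2 + x 1 ^ 2) := by ring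
    _ = ((1:ℝ)+l^2)⁻¹ * (x 0 ^ 2 + x 1 ^ 2) := by rw [hcc]
    _ ≤ 1 * (x 0 ^ 2 + x 1 ^ 2) := mul_le_mul_of_nonneg_right hc1 (by positivity)
    _ = x 0 ^ 2 + x 1 ^ 2 := one_mul _


/-- contraction property of the fully-implicit first step: with
`KₓΔt < 1/2`, the map `F` is Lipschitz with constant at most `2KₓΔt < 1` for the
norm `‖(y,v)‖_ε = ‖y‖ + ε‖v‖`, hence has a unique fixed point. -/
theorem stmt17 (Kx ε Δt t₁ : ℝ) (hKx : 0 ≤ Kx) (hε : 0 < ε) (hΔt : 0 < Δt)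
    (hsmall : Kx * Δt < 1 / 2)
    (E : ℝ → EuclideanSpace ℝ (Fin 2) → EuclideanSpace ℝ (Fin 2))
    (hLx : ∀ t x y, ‖E t x - E t y‖ ≤ Kx * ‖x - y‖)
    (y₀ v₀ : EuclideanSpace ℝ (Fin 2))
    (F : EuclideanSpace ℝ (Fin 2) × EuclideanSpace ℝ (Fin 2) →
        EuclideanSpace ℝ (Fin 2) × EuclideanSpace ℝ (Fin 2))
    (hF : ∀ p, F p =
      (y₀ - Δt • perp (E t₁ (p.1 + ε • perp p.2)),
       Matrix.toEuclideanCLM (n := Fin 2) (𝕜 := ℝ) ((1 + (Δt / ε ^ 2) • Jmat)⁻¹)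
         (v₀ + (Δt / ε) • E t₁ (p.1 + ε • perp p.2)))) :
    (∀ p q, ‖(F p).1 - (F q).1‖ + ε * ‖(F p).2 - (F q).2‖
        ≤ 2 * Kx * Δt * (‖p.1 - q.1‖ + ε * ‖p.2 - q.2‖)) ∧
    2 * Kx * Δt < 1 ∧
    ∃! p, F p = p := by
  have hεne : ε ≠ 0 := hε.ne'
  -- main Lipschitz estimate
  have hLip : ∀ p q, ‖(F p).1 - (F q).1‖ + ε * ‖(F p).2 - (F q).2‖
      ≤ 2 * Kx * Δt * (‖p.1 - q.1‖ + ε * ‖p.2 - q.2‖) := by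
    intro p q
    set u := p.1 + ε • perp p.2 with hu
    set v := q.1 + ε • perp q.2 with hv
    set Δ := E t₁ u - E t₁ v with hΔdef
    have huv : u - v = (p.1 - q.1) + ε • perp (p.2 - q.2) := by
      rw [perp_sub, smul_sub, hu, hv]
      abel
    have hΔ : ‖Δ‖ ≤ Kx * (‖p.1 - q.1‖ + ε * ‖p.2 - q.2‖) := by
      refine (hLx t₁ u v).trans ?_
      apply mul_le_mul_of_nonneg_left _ hKx
      rw [huv]
      refine (norm_add_le _ _).trans ?_
      rw [norm_smul, Real.norm_eq_abs, abs_of_pos hε, norm_perp]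
    have e1 : (F p).1 - (F q).1 = -(Δt • perp Δ) := by
      rw [hF p, hF q]
      show (y₀ - Δt • perp (E t₁ u)) - (y₀ - Δt • perp (E t₁ v)) = _
      rw [hΔdef, perp_sub, smul_sub]
      abel
    have hb1 : ‖(F p).1 - (F q).1‖ = Δt * ‖Δ‖ := by
      rw [e1, norm_neg, norm_smul, Real.norm_eq_abs, abs_of_pos hΔt, norm_perp]
    have e2 : (F p).2 - (F q).2 =
        Matrix.toEuclideanCLM (n := Fin 2) (𝕜 := ℝ) ((1 + (Δt / ε ^ 2) • Jmat)⁻¹)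
          ((Δt / ε) • Δ) := by
      rw [hF p, hF q]
      show Matrix.toEuclideanCLM (n := Fin 2) (𝕜 := ℝ) ((1 + (Δt / ε ^ 2) • Jmat)⁻¹)
          (v₀ + (Δt / ε) • E t₁ u)
        - Matrix.toEuclideanCLM (n := Fin 2) (𝕜 := ℝ) ((1 + (Δt / ε ^ 2) • Jmat)⁻¹)
          (v₀ + (Δt / ε) • E t₁ v) = _
      rw [← map_sub]
      congr 1
      rw [hΔdef, smul_sub]
      abel
    have hb2 : ‖(F p).2 - (F q).2‖ ≤ (Δt / ε) * ‖Δ‖ := by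
      rw [e2]
      refine (inv_bound _ _).trans_eq ?_
      rw [norm_smul, Real.norm_eq_abs, abs_of_pos (by positivity)]
    have hb2' : ε * ‖(F p).2 - (F q).2‖ ≤ Δt * ‖Δ‖ := by
      calc ε * ‖(F p).2 - (F q).2‖ ≤ ε * ((Δt / ε) * ‖Δ‖) :=
            mul_le_mul_of_nonneg_left hb2 hε.le
        _ = Δt * ‖Δ‖ := by field_simp
    nlinarith [hΔt.le, hΔ, hb1, hb2']
  have hlt : 2 * Kx * Δt < 1 := by nlinarith
  refine ⟨hLip, hlt, ?_⟩
  -- fixed point via Banach on the L¹ product space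
  set X := WithLp 1 (EuclideanSpace ℝ (Fin 2) × EuclideanSpace ℝ (Fin 2)) with hX
  let e := WithLp.equiv 1 (EuclideanSpace ℝ (Fin 2) × EuclideanSpace ℝ (Fin 2))
  let ψ : EuclideanSpace ℝ (Fin 2) × EuclideanSpace ℝ (Fin 2) → X :=
    fun r => e.symm (r.1, ε • r.2)
  let τ : X → EuclideanSpace ℝ (Fin 2) × EuclideanSpace ℝ (Fin 2) :=
    fun x => ((e x).1, ε⁻¹ • (e x).2)
  have hτψ : ∀ r, τ (ψ r) = r := by
    intro r
    show ((r.1 : EuclideanSpace ℝ (Fin 2)), ε⁻¹ • (ε • r.2)) = r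
    rw [inv_smul_smul₀ hεne]
  have hψτ : ∀ x, ψ (τ x) = x := by
    intro x
    show e.symm (((e x).1, ε • (ε⁻¹ • (e x).2))) = x
    rw [smul_inv_smul₀ hεne, Prod.mk.eta]
    exact e.symm_apply_apply x
  let T : X → X := fun x => ψ (F (τ x))
  have hC0 : (0:ℝ) ≤ 2 * Kx * Δt := by positivity
  have hlipT : LipschitzWith ⟨2 * Kx * Δt, hC0⟩ T := by
    apply LipschitzWith.of_dist_le_mul
    intro x y
    have hd1 := WithLp.prod_dist_eq_add (p := 1) (by norm_num) (T x) (T y)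
    have hd2 := WithLp.prod_dist_eq_add (p := 1) (by norm_num) x y
    norm_num at hd1 hd2
    rw [hd1, hd2]
    have h1 : dist (F (τ x)).1 (F (τ y)).1 = ‖(F (τ x)).1 - (F (τ y)).1‖ := dist_eq_norm _ _
    have h2 : dist (ε • (F (τ x)).2) (ε • (F (τ y)).2) = ε * ‖(F (τ x)).2 - (F (τ y)).2‖ := by
      rw [dist_eq_norm, ← smul_sub, norm_smul, Real.norm_eq_abs, abs_of_pos hε]
    have h3 : dist (e x).1 (e y).1 = ‖(τ x).1 - (τ y).1‖ := dist_eq_norm _ _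
    have h4 : dist (e x).2 (e y).2 = ε * ‖(τ x).2 - (τ y).2‖ := by
      show dist (e x).2 (e y).2 = ε * ‖ε⁻¹ • (e x).2 - ε⁻¹ • (e y).2‖
      rw [dist_eq_norm, ← smul_sub, norm_smul, Real.norm_eq_abs, abs_of_pos (by positivity),
        ← mul_assoc, mul_inv_cancel₀ hεne, one_mul]
    show dist (F (τ x)).1 (F (τ y)).1 + dist (ε • (F (τ x)).2) (ε • (F (τ y)).2)
      ≤ (2 * Kx * Δt) * (dist (e x).1 (e y).1 + dist (e x).2 (e y).2)
    rw [h1, h2, h3, h4]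
    exact hLip (τ x) (τ y)
  have hcontr : ContractingWith ⟨2 * Kx * Δt, hC0⟩ T := by
    refine ⟨?_, hlipT⟩
    refine (NNReal.coe_lt_coe (r₁ := ⟨2 * Kx * Δt, hC0⟩) (r₂ := 1)).mp ?_
    push_cast
    exact hlt
  have hfix : Function.IsFixedPt T (hcontr.fixedPoint T) := hcontr.fixedPoint_isFixedPt
  refine ⟨τ (hcontr.fixedPoint T), ?_, ?_⟩
  · have : ψ (F (τ (hcontr.fixedPoint T))) = ψ (τ (hcontr.fixedPoint T)) := by
      rw [hψτ]
      exact hfix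
    have := congrArg τ this
    rwa [hτψ, hτψ] at this
  · intro r hr
    have hfr : Function.IsFixedPt T (ψ r) := by
      show ψ (F (τ (ψ r))) = ψ r
      rw [hτψ, hr]
    have := hcontr.fixedPoint_unique hfr
    rw [← this, hτψ]
end
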